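/- For every n ≥ 2, none of the semigroups M_n(ℕ_max), M_n((-ℕ)_max), UT_n(ℕ_max) and UT_n((-ℕ)_max) is strongly permutable. -/

import Mathlib

set_option maxHeartbeats 1000000

universe u

/-! ### Semiring classes.

A *semiring* here is a nonempty set with an associative commutative addition and an
associative multiplication which distributes over addition on both sides; no zero or
identity element is assumed. -/

class PlainSemiring (S : Type u) extends Add S, Mul S where
  nonempty' : Nonempty S
  add_assoc' : ∀ a b c : S, a + b + c = a + (b + c)
  add_comm' : ∀ a b : S, a + b = b + a
  mul_assoc' : ∀ a b c : S, a * b * c = a * (b * c)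
  left_distrib' : ∀ a b c : S, a * (b + c) = a * b + a * c
  right_distrib' : ∀ a b c : S, (a + b) * c = a * c + b * c

/-- A bipotent semiring: `x + y` is always either `x` or `y`.
(The induced total order is given by `x ≤ y ↔ x + y = y`.) -/
class BipotentSemiring (S : Type u) extends PlainSemiring S where
  bipotent : ∀ a b : S, a + b = a ∨ a + b = b

/-- A commutative bipotent semiring. -/
class CommBipotentSemiring (S : Type u) extends BipotentSemiring S where
  mul_comm' : ∀ a b : S, a * b = b * a

/-- `mpow a n` is the `(n+1)`-st power of `a`, so the set of positive powers of `a`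
is exactly `Set.range (mpow a)`, and the multiplicative order of `a` is the
cardinality of `Set.range (mpow a)`. -/
def mpow {S : Type*} [Mul S] (a : S) : ℕ → S
  | 0 => a
  | n + 1 => mpow a n * a

lemma mpow_mul_mpow {S : Type*} [PlainSemiring S] (a : S) (m n : ℕ) :
    mpow a m * mpow a n = mpow a (m + n + 1) := by
  induction n with
  | zero => rfl
  | succ n ih =>
    show mpow a m * (mpow a n * a) = mpow a (m + n + 1) * a
    rw [← PlainSemiring.mul_assoc', ih]

/-! ### Products of finite families, and permutability. -/

/-- Fold step used to define sums/products of possibly empty families in a structure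
with no neutral element; the overall fold is `none` iff the family is empty. -/
def optStep {S : Type*} (op : S → S → S) : Option S → S → Option S :=
  fun acc x => some (acc.elim x (fun a => op a x))

/-- The sum `s 0 + s 1 + ⋯` of a finite family, as an `Option` (`none` iff `k = 0`). -/
def finSum {S : Type*} [Add S] {k : ℕ} (s : Fin k → S) : Option S :=
  (List.ofFn s).foldl (optStep (· + ·)) none

/-- The product `s 0 * s 1 * ⋯` of a finite family, as an `Option` (`none` iff `k = 0`). -/
def finProd {S : Type*} [Mul S] {k : ℕ} (s : Fin k → S) : Option S :=
  (List.ofFn s).foldl (optStep (· * ·)) none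

/-- A multiplicative structure is `k`-permutable if every product of `k` elements is
preserved by some non-identity permutation of its factors. -/
def KPermutable (S : Type*) [Mul S] (k : ℕ) : Prop :=
  ∀ s : Fin k → S, ∃ σ : Equiv.Perm (Fin k), σ ≠ Equiv.refl (Fin k) ∧
    finProd (fun i => s (σ i)) = finProd s

/-- A semigroup is strongly permutable if it is `k`-permutable for some `k ≥ 2`. -/
def StronglyPermutable (S : Type*) [Mul S] : Prop :=
  ∃ k : ℕ, 2 ≤ k ∧ KPermutable S k

/-- A semigroup is weakly permutable if for some `k ≥ 2`, any product of `k` elements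
is computed identically by two distinct permutations of its factors. -/
def WeaklyPermutable (S : Type*) [Mul S] : Prop :=
  ∃ k : ℕ, 2 ≤ k ∧ ∀ s : Fin k → S, ∃ σ τ : Equiv.Perm (Fin k), σ ≠ τ ∧
    finProd (fun i => s (σ i)) = finProd (fun i => s (τ i))

/-- Isomorphism of semirings (bijection preserving addition and multiplication). -/
def RingLikeIso (S T : Type*) [Add S] [Mul S] [Add T] [Mul T] : Prop :=
  ∃ f : S → T, Function.Bijective f ∧ (∀ a b : S, f (a + b) = f a + f b) ∧
    (∀ a b : S, f (a * b) = f a * f b)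

/-! ### Matrices. -/

/-- Square `n × n` matrices over `S`. -/
def MatSR (S : Type u) (n : ℕ) : Type u := Fin n → Fin n → S

/-- Matrix multiplication, `(A*B) i j = Σ_k (A i k * B k j)`.  (For `n ≥ 1` — the only
case of interest — the `getD` default value is never used.) -/
def matMul {S : Type*} [Add S] [Mul S] {n : ℕ} (A B : MatSR S n) : MatSR S n :=
  fun i j => (finSum (fun k : Fin n => A i k * B k j)).getD (A i j * B i j)

/-- The multiplicative semigroup `M_n(S)`. -/
instance {S : Type*} [Add S] [Mul S] {n : ℕ} : Mul (MatSR S n) := ⟨matMul⟩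

/-! ### `S⁰`: adjoining a zero, and upper triangular matrices. -/

/-- `S` with a zero (additively neutral, multiplicatively absorbing) element adjoined. -/
inductive Adj0 (S : Type u) : Type u
  | zero : Adj0 S
  | elem : S → Adj0 S

namespace Adj0

def add' {S : Type*} [Add S] : Adj0 S → Adj0 S → Adj0 S
  | .zero, b => b
  | .elem a, .zero => .elem a
  | .elem a, .elem b => .elem (a + b)

def mul' {S : Type*} [Mul S] : Adj0 S → Adj0 S → Adj0 S
  | .zero, _ => .zero
  | .elem _, .zero => .zero
  | .elem a, .elem b => .elem (a * b)

instance {S : Type*} [Add S] : Add (Adj0 S) := ⟨add'⟩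
instance {S : Type*} [Mul S] : Mul (Adj0 S) := ⟨mul'⟩

@[simp] lemma zero_add {S : Type*} [Add S] (b : Adj0 S) : (zero : Adj0 S) + b = b := rfl
@[simp] lemma add_zero {S : Type*} [Add S] (a : Adj0 S) : a + (zero : Adj0 S) = a := by
  cases a <;> rfl
@[simp] lemma elem_add_elem {S : Type*} [Add S] (a b : S) :
    (elem a : Adj0 S) + elem b = elem (a + b) := rfl
@[simp] lemma zero_mul {S : Type*} [Mul S] (b : Adj0 S) : (zero : Adj0 S) * b = zero := rfl
@[simp] lemma mul_zero {S : Type*} [Mul S] (a : Adj0 S) : a * (zero : Adj0 S) = zero := by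
  cases a <;> rfl
@[simp] lemma elem_mul_elem {S : Type*} [Mul S] (a b : S) :
    (elem a : Adj0 S) * elem b = elem (a * b) := rfl

lemma add_eq_zero_iff {S : Type*} [Add S] (a b : Adj0 S) :
    a + b = zero ↔ a = zero ∧ b = zero := by
  cases a <;> cases b <;> simp

end Adj0

lemma foldl_optStep_adj0 {S : Type*} [Add S] (l : List (Adj0 S)) (a : Adj0 S) :
    ∃ c : Adj0 S, l.foldl (optStep (· + ·)) (some a) = some c ∧
      (c = Adj0.zero ↔ a = Adj0.zero ∧ ∀ x ∈ l, x = Adj0.zero) := by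
  induction l generalizing a with
  | nil => exact ⟨a, rfl, by simp⟩
  | cons x l ih =>
    obtain ⟨c, hc, hiff⟩ := ih (a + x)
    refine ⟨c, ?_, ?_⟩
    · simpa [optStep] using hc
    · rw [hiff, Adj0.add_eq_zero_iff]
      simp only [List.mem_cons, forall_eq_or_imp]
      tauto

lemma finSum_adj0_eq_zero {S : Type*} [Add S] {n : ℕ} (f : Fin n → Adj0 S) (i : Fin n)
    (d : Adj0 S) (h : ∀ k, f k = Adj0.zero) : (finSum f).getD d = Adj0.zero := by
  cases n with
  | zero => exact i.elim0
  | succ m =>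
    rw [finSum, List.ofFn_succ, List.foldl_cons]
    obtain ⟨c, hc, hiff⟩ := foldl_optStep_adj0 (List.ofFn fun i : Fin m => f i.succ) (f 0)
    rw [show optStep (· + ·) none (f 0) = some (f 0) from rfl, hc]
    have : c = Adj0.zero := hiff.mpr ⟨h 0, by
      intro x hx
      rw [List.mem_ofFn] at hx
      obtain ⟨j, rfl⟩ := hx
      exact h _⟩
    simp [this]

lemma finSum_adj0_ne_zero {S : Type*} [Add S] {n : ℕ} (f : Fin n → Adj0 S) (i : Fin n)
    (d : Adj0 S) (h : f i ≠ Adj0.zero) : (finSum f).getD d ≠ Adj0.zero := by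
  cases n with
  | zero => exact i.elim0
  | succ m =>
    rw [finSum, List.ofFn_succ, List.foldl_cons]
    obtain ⟨c, hc, hiff⟩ := foldl_optStep_adj0 (List.ofFn fun i : Fin m => f i.succ) (f 0)
    rw [show optStep (· + ·) none (f 0) = some (f 0) from rfl, hc]
    simp only [Option.getD_some]
    intro hcz
    obtain ⟨h0, hall⟩ := hiff.mp hcz
    induction i using Fin.cases with
    | zero => exact h h0
    | succ j => exact h (hall _ (List.mem_ofFn.mpr ⟨j, rfl⟩))

/-- Upper-triangularity over `S⁰`: entries strictly below the diagonal are the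
adjoined zero; entries on and above the diagonal lie in `S`. -/
def IsUT {S : Type*} {n : ℕ} (A : MatSR (Adj0 S) n) : Prop :=
  (∀ i j : Fin n, (j : ℕ) < (i : ℕ) → A i j = Adj0.zero) ∧
  (∀ i j : Fin n, (i : ℕ) ≤ (j : ℕ) → ∃ s : S, A i j = Adj0.elem s)

lemma IsUT.mul {S : Type*} [Add S] [Mul S] {n : ℕ} {A B : MatSR (Adj0 S) n}
    (hA : IsUT A) (hB : IsUT B) : IsUT (matMul A B) := by
  constructor
  · intro i j hji
    apply finSum_adj0_eq_zero _ i
    intro k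
    rcases le_or_gt (i : ℕ) (k : ℕ) with h | h
    · rw [hB.1 k j (lt_of_lt_of_le hji h), Adj0.mul_zero]
    · rw [hA.1 i k h, Adj0.zero_mul]
  · intro i j hij
    have hne : matMul A B i j ≠ Adj0.zero := by
      apply finSum_adj0_ne_zero _ i
      obtain ⟨s, hs⟩ := hA.2 i i le_rfl
      obtain ⟨t, ht⟩ := hB.2 i j hij
      rw [hs, ht, Adj0.elem_mul_elem]
      simp
    cases hc : matMul A B i j with
    | zero => exact absurd hc hne
    | elem s => exact ⟨s, rfl⟩

/-- The multiplicative semigroup `UT_n(S)` of upper triangular matrices over `S⁰`. -/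
def UTMat (S : Type u) (n : ℕ) : Type u := {A : MatSR (Adj0 S) n // IsUT A}

instance {S : Type*} [Add S] [Mul S] {n : ℕ} : Mul (UTMat S n) :=
  ⟨fun A B => ⟨matMul A.1 B.1, A.2.mul B.2⟩⟩

/-! ### `S^{01}`: adjoining a zero and an identity, and unitriangular matrices. -/

/-- `S` with a zero and a multiplicative identity adjoined (`S^{01}` in the paper).
The sum of `one` and an `elem` is left undefined in the paper; it is given an
arbitrary value here, and never arises in products of unitriangular matrices. -/
inductive Adj01 (S : Type u) : Type u
  | zero : Adj01 S
  | one : Adj01 S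
  | elem : S → Adj01 S

namespace Adj01

def add' {S : Type*} [Add S] : Adj01 S → Adj01 S → Adj01 S
  | .zero, b => b
  | a, .zero => a
  | .one, .one => .one
  | .one, .elem b => .elem b
  | .elem a, .one => .elem a
  | .elem a, .elem b => .elem (a + b)

def mul' {S : Type*} [Mul S] : Adj01 S → Adj01 S → Adj01 S
  | .zero, _ => .zero
  | _, .zero => .zero
  | .one, b => b
  | a, .one => a
  | .elem a, .elem b => .elem (a * b)

instance {S : Type*} [Add S] : Add (Adj01 S) := ⟨add'⟩
instance {S : Type*} [Mul S] : Mul (Adj01 S) := ⟨mul'⟩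

@[simp] lemma zero_add {S : Type*} [Add S] (b : Adj01 S) : (zero : Adj01 S) + b = b := by
  cases b <;> rfl
@[simp] lemma add_zero {S : Type*} [Add S] (a : Adj01 S) : a + (zero : Adj01 S) = a := by
  cases a <;> rfl
@[simp] lemma one_add_one {S : Type*} [Add S] : (one : Adj01 S) + one = one := rfl
@[simp] lemma elem_add_elem {S : Type*} [Add S] (a b : S) :
    (elem a : Adj01 S) + elem b = elem (a + b) := rfl
@[simp] lemma one_add_elem {S : Type*} [Add S] (b : S) :
    (one : Adj01 S) + elem b = elem b := rfl
@[simp] lemma elem_add_one {S : Type*} [Add S] (a : S) :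
    (elem a : Adj01 S) + one = elem a := rfl
@[simp] lemma zero_mul {S : Type*} [Mul S] (b : Adj01 S) : (zero : Adj01 S) * b = zero := by
  cases b <;> rfl
@[simp] lemma mul_zero {S : Type*} [Mul S] (a : Adj01 S) : a * (zero : Adj01 S) = zero := by
  cases a <;> rfl
@[simp] lemma one_mul {S : Type*} [Mul S] (b : Adj01 S) : (one : Adj01 S) * b = b := by
  cases b <;> rfl
@[simp] lemma mul_one {S : Type*} [Mul S] (a : Adj01 S) : a * (one : Adj01 S) = a := by
  cases a <;> rfl
@[simp] lemma elem_mul_elem {S : Type*} [Mul S] (a b : S) :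
    (elem a : Adj01 S) * elem b = elem (a * b) := rfl

lemma mul_ne_one {S : Type*} [Mul S] {a b : Adj01 S} (ha : a ≠ one) (hb : b ≠ one) :
    a * b ≠ one := by
  cases a <;> cases b <;> simp_all

lemma add_ne_one {S : Type*} [Add S] {a b : Adj01 S} (ha : a ≠ one) (hb : b ≠ one) :
    a + b ≠ one := by
  cases a <;> cases b <;> simp_all

lemma add_01 {S : Type*} [Add S] {a b : Adj01 S} (ha : a = zero ∨ a = one)
    (hb : b = zero ∨ b = one) :
    (a + b = zero ∨ a + b = one) ∧ (a + b = one ↔ a = one ∨ b = one) := by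
  rcases ha with rfl | rfl <;> rcases hb with rfl | rfl <;> simp

end Adj01

lemma foldl_optStep_adj01 {S : Type*} [Add S] (l : List (Adj01 S)) (a : Adj01 S)
    (ha : a = Adj01.zero ∨ a = Adj01.one) (hl : ∀ x ∈ l, x = Adj01.zero ∨ x = Adj01.one) :
    ∃ c : Adj01 S, l.foldl (optStep (· + ·)) (some a) = some c ∧
      (c = Adj01.zero ∨ c = Adj01.one) ∧
      (c = Adj01.one ↔ a = Adj01.one ∨ ∃ x ∈ l, x = Adj01.one) := by
  induction l generalizing a with
  | nil => exact ⟨a, rfl, ha, by simp⟩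
  | cons x l ih =>
    have hx := hl x (by simp)
    have key := Adj01.add_01 ha hx
    obtain ⟨c, hc, hc01, hiff⟩ := ih (a + x) key.1 (fun y hy => hl y (by simp [hy]))
    refine ⟨c, by simpa [optStep] using hc, hc01, ?_⟩
    rw [hiff, key.2]
    simp only [List.mem_cons, exists_eq_or_imp]
    tauto

lemma foldl_optStep_adj01_ne_one {S : Type*} [Add S] (l : List (Adj01 S)) (a : Adj01 S)
    (ha : a ≠ Adj01.one) (hl : ∀ x ∈ l, x ≠ Adj01.one) :
    ∃ c : Adj01 S, l.foldl (optStep (· + ·)) (some a) = some c ∧ c ≠ Adj01.one := by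
  induction l generalizing a with
  | nil => exact ⟨a, rfl, ha⟩
  | cons x l ih =>
    have hax : a + x ≠ Adj01.one := Adj01.add_ne_one ha (hl x (by simp))
    obtain ⟨c, hc, hcne⟩ := ih (a + x) hax (fun y hy => hl y (by simp [hy]))
    exact ⟨c, by simpa [optStep] using hc, hcne⟩

lemma finSum_adj01_eq_one {S : Type*} [Add S] {n : ℕ} (f : Fin n → Adj01 S) (i : Fin n)
    (d : Adj01 S) (h01 : ∀ k, f k = Adj01.zero ∨ f k = Adj01.one) (hi : f i = Adj01.one) :
    (finSum f).getD d = Adj01.one := by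
  cases n with
  | zero => exact i.elim0
  | succ m =>
    rw [finSum, List.ofFn_succ, List.foldl_cons]
    obtain ⟨c, hc, _, hiff⟩ := foldl_optStep_adj01 (List.ofFn fun i : Fin m => f i.succ) (f 0)
      (h01 0) (by
        intro x hx
        rw [List.mem_ofFn] at hx
        obtain ⟨j, rfl⟩ := hx
        exact h01 _)
    rw [show optStep (· + ·) none (f 0) = some (f 0) from rfl, hc]
    simp only [Option.getD_some]
    apply hiff.mpr
    induction i using Fin.cases with
    | zero => exact Or.inl hi
    | succ j => exact Or.inr ⟨f j.succ, List.mem_ofFn.mpr ⟨j, rfl⟩, hi⟩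

lemma finSum_adj01_eq_zero {S : Type*} [Add S] {n : ℕ} (f : Fin n → Adj01 S) (i : Fin n)
    (d : Adj01 S) (h : ∀ k, f k = Adj01.zero) : (finSum f).getD d = Adj01.zero := by
  cases n with
  | zero => exact i.elim0
  | succ m =>
    rw [finSum, List.ofFn_succ, List.foldl_cons]
    obtain ⟨c, hc, hc01, hiff⟩ := foldl_optStep_adj01 (List.ofFn fun i : Fin m => f i.succ)
      (f 0) (Or.inl (h 0)) (by
        intro x hx
        rw [List.mem_ofFn] at hx
        obtain ⟨j, rfl⟩ := hx
        exact Or.inl (h _))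
    rw [show optStep (· + ·) none (f 0) = some (f 0) from rfl, hc]
    simp only [Option.getD_some]
    rcases hc01 with h' | h'
    · exact h'
    · exfalso
      rcases hiff.mp h' with h'' | ⟨x, hx, hx1⟩
      · rw [h 0] at h''; cases h''
      · rw [List.mem_ofFn] at hx
        obtain ⟨j, rfl⟩ := hx
        rw [h _] at hx1; cases hx1

lemma finSum_adj01_ne_one {S : Type*} [Add S] {n : ℕ} (f : Fin n → Adj01 S) (i : Fin n)
    (d : Adj01 S) (h : ∀ k, f k ≠ Adj01.one) : (finSum f).getD d ≠ Adj01.one := by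
  cases n with
  | zero => exact i.elim0
  | succ m =>
    rw [finSum, List.ofFn_succ, List.foldl_cons]
    obtain ⟨c, hc, hcne⟩ := foldl_optStep_adj01_ne_one (List.ofFn fun i : Fin m => f i.succ)
      (f 0) (h 0) (by
        intro x hx
        rw [List.mem_ofFn] at hx
        obtain ⟨j, rfl⟩ := hx
        exact h _)
    rw [show optStep (· + ·) none (f 0) = some (f 0) from rfl, hc]
    simpa using hcne

/-- Unitriangularity over `S^{01}`: the adjoined zero strictly below the diagonal, the
adjoined identity on the diagonal, and entries of `S⁰` (i.e. anything except the
adjoined identity) strictly above the diagonal. -/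
def IsU {S : Type*} {n : ℕ} (A : MatSR (Adj01 S) n) : Prop :=
  (∀ i j : Fin n, (j : ℕ) < (i : ℕ) → A i j = Adj01.zero) ∧
  (∀ i : Fin n, A i i = Adj01.one) ∧
  (∀ i j : Fin n, (i : ℕ) < (j : ℕ) → A i j ≠ Adj01.one)

lemma IsU.mul {S : Type*} [Add S] [Mul S] {n : ℕ} {A B : MatSR (Adj01 S) n}
    (hA : IsU A) (hB : IsU B) : IsU (matMul A B) := by
  refine ⟨?_, ?_, ?_⟩
  · intro i j hji
    apply finSum_adj01_eq_zero _ i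
    intro k
    rcases le_or_gt (i : ℕ) (k : ℕ) with h | h
    · rw [hB.1 k j (lt_of_lt_of_le hji h), Adj01.mul_zero]
    · rw [hA.1 i k h, Adj01.zero_mul]
  · intro i
    apply finSum_adj01_eq_one _ i
    · intro k
      rcases lt_trichotomy (k : ℕ) (i : ℕ) with h | h | h
      · rw [hA.1 i k h, Adj01.zero_mul]; exact Or.inl rfl
      · have : k = i := Fin.ext h
        subst this
        rw [hA.2.1 k, hB.2.1 k, Adj01.one_mul]; exact Or.inr rfl
      · rw [hB.1 k i h, Adj01.mul_zero]; exact Or.inl rfl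
    · rw [hA.2.1 i, hB.2.1 i, Adj01.one_mul]
  · intro i j hij
    apply finSum_adj01_ne_one _ i
    intro k
    rcases lt_trichotomy (k : ℕ) (i : ℕ) with h | h | h
    · rw [hA.1 i k h, Adj01.zero_mul]; exact fun h => by cases h
    · have : k = i := Fin.ext h
      subst this
      rw [hA.2.1 k, Adj01.one_mul]
      exact hB.2.2 k j (by omega)
    · rcases lt_trichotomy (k : ℕ) (j : ℕ) with h' | h' | h'
      · exact Adj01.mul_ne_one (hA.2.2 i k h) (hB.2.2 k j h')
      · have : k = j := Fin.ext h'
        subst this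
        rw [hB.2.1 k, Adj01.mul_one]
        exact hA.2.2 i k h
      · rw [hB.1 k j h', Adj01.mul_zero]; exact fun h => by cases h

/-- The multiplicative monoid `U_n(S)` of unitriangular matrices over `S^{01}`. -/
def UMat (S : Type u) (n : ℕ) : Type u := {A : MatSR (Adj01 S) n // IsU A}

instance {S : Type*} [Add S] [Mul S] {n : ℕ} : Mul (UMat S n) :=
  ⟨fun A B => ⟨matMul A.1 B.1, A.2.mul B.2⟩⟩

/-! ### Monogenic subsemirings. -/

/-- The carrier of the monogenic subsemiring `⟨a⟩` generated by `a` is the set of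
positive powers of `a`; in a bipotent semiring it is closed under addition. -/
instance genAdd {S : Type*} [BipotentSemiring S] (a : S) : Add ↥(Set.range (mpow a)) :=
  ⟨fun p q => ⟨p.1 + q.1, by
    rcases BipotentSemiring.bipotent p.1 q.1 with h | h <;> rw [h]
    exacts [p.2, q.2]⟩⟩

instance genMul {S : Type*} [BipotentSemiring S] (a : S) : Mul ↥(Set.range (mpow a)) :=
  ⟨fun p q => ⟨p.1 * q.1, by
    obtain ⟨m, hm⟩ := p.2
    obtain ⟨n, hn⟩ := q.2
    exact ⟨m + n + 1, by rw [← hm, ← hn, mpow_mul_mpow]⟩⟩⟩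

/-! ### Concrete bipotent semirings. -/

/-- The tropical semiring `ℕ_max` of positive natural numbers: addition is `max`,
multiplication is ordinary addition. -/
def NMax : Type := {n : ℕ // 0 < n}

instance : Add NMax := ⟨fun a b => ⟨max a.1 b.1, by have := a.2; have := b.2; omega⟩⟩
instance : Mul NMax := ⟨fun a b => ⟨a.1 + b.1, by have := a.2; have := b.2; omega⟩⟩

/-- The tropical semiring `(-ℕ)_max` of negative integers: addition is `max`,
multiplication is ordinary addition. -/
def NegNMax : Type := {z : ℤ // z < 0}

instance : Add NegNMax := ⟨fun a b => ⟨max a.1 b.1, by have := a.2; have := b.2; omega⟩⟩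
instance : Mul NegNMax := ⟨fun a b => ⟨a.1 + b.1, by have := a.2; have := b.2; omega⟩⟩

/-- The truncated tropical semiring `[k]_max` on `{1,…,k}`: addition is `max`,
multiplication is `a·b = min (a+b) k`. -/
def KMax (k : ℕ) : Type := {n : ℕ // 0 < n ∧ n ≤ k}

instance {k : ℕ} : Add (KMax k) :=
  ⟨fun a b => ⟨max a.1 b.1, by have := a.2; have := b.2; omega⟩⟩
instance {k : ℕ} : Mul (KMax k) :=
  ⟨fun a b => ⟨min (a.1 + b.1) k, by have := a.2; have := b.2; omega⟩⟩

/-- The truncated tropical semiring `[-k]_max` on `{-k,…,-1}`: addition is `max`,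
multiplication is `a·b = max (a+b) (-k)`. -/
def NegKMax (k : ℕ) : Type := {z : ℤ // -(k : ℤ) ≤ z ∧ z ≤ -1}

instance {k : ℕ} : Add (NegKMax k) :=
  ⟨fun a b => ⟨max a.1 b.1, by have := a.2; have := b.2; omega⟩⟩
instance {k : ℕ} : Mul (NegKMax k) :=
  ⟨fun a b => ⟨max (a.1 + b.1) (-(k : ℤ)), by have := a.2; have := b.2; omega⟩⟩

/-- The two-element boolean semifield `𝔹`: `{0,1}` with `0 < 1`, addition `max` (= "or")
and the usual multiplication (= "and"). -/
def BoolSR : Type := Bool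

instance : Add BoolSR := ⟨fun a b => (Bool.or a b : Bool)⟩
instance : Mul BoolSR := ⟨fun a b => (Bool.and a b : Bool)⟩

/-- A chain semiring: a linearly ordered set with addition `max` and multiplication `min`. -/
def ChainSR (L : Type u) [LinearOrder L] : Type u := L

instance {L : Type u} [LinearOrder L] : Add (ChainSR L) := ⟨fun a b => (max a b : L)⟩
instance {L : Type u} [LinearOrder L] : Mul (ChainSR L) := ⟨fun a b => (min a b : L)⟩

/-- The three-element commutative bipotent semiring of Proposition 1: order `A < B < C`
(addition is `max`), every element multiplicatively idempotent, and all products of two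
distinct elements equal to `B`. -/
inductive Three : Type
  | A : Three
  | B : Three
  | C : Three
deriving DecidableEq

instance : Fintype Three :=
  ⟨{Three.A, Three.B, Three.C}, fun x => by cases x <;> simp⟩

def Three.add' : Three → Three → Three
  | .A, y => y
  | x, .A => x
  | .B, y => y
  | x, .B => x
  | .C, .C => .C

def Three.mul' : Three → Three → Three
  | .A, .A => .A
  | .B, .B => .B
  | .C, .C => .C
  | _, _ => .B

instance : Add Three := ⟨Three.add'⟩
instance : Mul Three := ⟨Three.mul'⟩

instance : CommBipotentSemiring Three where
  nonempty' := ⟨Three.A⟩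
  add_assoc' := by decide
  add_comm' := by decide
  mul_assoc' := by decide
  left_distrib' := by decide
  right_distrib' := by decide
  bipotent := by decide
  mul_comm' := by decide

/-- A bundled (possibly zero-less and identity-less) semiring, used to quantify over
semirings inside hypotheses. -/
structure BundledSemiring : Type 1 where
  carrier : Type
  add : carrier → carrier → carrier
  mul : carrier → carrier → carrier
  nonempty' : Nonempty carrier
  add_assoc' : ∀ a b c, add (add a b) c = add a (add b c)
  add_comm' : ∀ a b, add a b = add b a
  mul_assoc' : ∀ a b c, mul (mul a b) c = mul a (mul b c)
  left_distrib' : ∀ a b c, mul a (add b c) = add (mul a b) (mul a c)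
  right_distrib' : ∀ a b c, mul (add a b) c = add (mul a c) (mul b c)

/-! ### Semifields. -/

/-- `z` is a zero element: additively neutral and multiplicatively absorbing. -/
def IsZeroElem {S : Type*} [Add S] [Mul S] (z : S) : Prop :=
  ∀ x : S, z + x = x ∧ x + z = x ∧ z * x = z ∧ x * z = z

/-- `S` is a semifield: a commutative semiring, possibly without zero, whose set of
non-zero elements forms a group under multiplication (with identity `e`). -/
def IsSemifield (S : Type*) [Add S] [Mul S] : Prop :=
  ∃ e : S, ¬ IsZeroElem e ∧
    (∀ x : S, ¬ IsZeroElem x → e * x = x ∧ x * e = x) ∧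
    (∀ x y : S, ¬ IsZeroElem x → ¬ IsZeroElem y → ¬ IsZeroElem (x * y)) ∧
    (∀ x : S, ¬ IsZeroElem x → ∃ y : S, ¬ IsZeroElem y ∧ x * y = e ∧ y * x = e)

/-! ### Truncated tropical semirings. -/

/-- The underlying set `[x,y] ∪ {0}` of the truncated tropical semiring `𝕋_{[x,y]}`
(without the zero element `-∞`), for `0 ≤ x`.  Addition is `max`; multiplication is
`y`-truncated addition `a ⊗ b = min (a+b) y`, with the element `0` acting as the
multiplicative identity. -/
def TTb (x y : ℝ) (_hx : 0 ≤ x) : Type := {r : ℝ // r = 0 ∨ (x ≤ r ∧ r ≤ y)}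

namespace TTb

protected def add {x y : ℝ} {hx : 0 ≤ x} (a b : TTb x y hx) : TTb x y hx :=
  ⟨max a.1 b.1, by rcases max_choice a.1 b.1 with h | h <;> rw [h]
                   exacts [a.2, b.2]⟩

protected noncomputable def mul {x y : ℝ} {hx : 0 ≤ x} (a b : TTb x y hx) : TTb x y hx :=
  if ha : a.1 = 0 then b else if hb : b.1 = 0 then a else
    ⟨min (a.1 + b.1) y, by
      rcases a.2 with h | h
      · exact absurd h ha
      rcases b.2 with h' | h'
      · exact absurd h' hb
      right
      exact ⟨le_min (by linarith [h.1, h'.1]) (by linarith [h.1, h.2]), min_le_right _ _⟩⟩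

instance {x y : ℝ} {hx : 0 ≤ x} : Add (TTb x y hx) := ⟨TTb.add⟩
noncomputable instance {x y : ℝ} {hx : 0 ≤ x} : Mul (TTb x y hx) := ⟨TTb.mul⟩

end TTb

/-- The truncated tropical semiring `𝕋_{[x,y]}` (for `0 ≤ x < y`): the real interval
`[x,y]` together with a multiplicative identity `0` and a zero `-∞`, with addition
`max` and multiplication the `y`-truncated addition `a ⊗ b = min (a+b) y`. -/
abbrev TT (x y : ℝ) (hx : 0 ≤ x) : Type := Adj0 (TTb x y hx)

/-- The multiplicative identity `0` of `𝕋_{[x,y]}`. -/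
noncomputable def ttId (x y : ℝ) (hx : 0 ≤ x) : TT x y hx := Adj0.elem ⟨0, Or.inl rfl⟩

lemma ttId_mul {x y : ℝ} {hx : 0 ≤ x} (b : TT x y hx) : ttId x y hx * b = b := by
  cases b with
  | zero => rfl
  | elem e =>
    show Adj0.elem (TTb.mul ⟨0, Or.inl rfl⟩ e) = Adj0.elem e
    delta TTb.mul
    exact congrArg Adj0.elem (dif_pos rfl)

/-- The subsemigroup `S` of `M_2(𝕋_{[1,z]})` of matrices of the form `[[0,a],[-∞,b]]`. -/
noncomputable def UpperS (z : ℝ) (hz : (0:ℝ) ≤ 1) : Type :=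
  {A : MatSR (TT 1 z hz) 2 // A 0 0 = ttId 1 z hz ∧ A 1 0 = Adj0.zero}

/-- The subsemigroup `S'` of `M_2(𝕋_{[1,z]})` of matrices of the form `[[0,-∞],[a,b]]`. -/
noncomputable def LowerS (z : ℝ) (hz : (0:ℝ) ≤ 1) : Type :=
  {A : MatSR (TT 1 z hz) 2 // A 0 0 = ttId 1 z hz ∧ A 0 1 = Adj0.zero}

noncomputable instance {z : ℝ} {hz : (0:ℝ) ≤ 1} : Mul (UpperS z hz) :=
  ⟨fun A B => ⟨A.1 * B.1, by
    obtain ⟨hA1, hA2⟩ := A.2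
    obtain ⟨hB1, hB2⟩ := B.2
    constructor
    · show A.1 0 0 * B.1 0 0 + A.1 0 1 * B.1 1 0 = ttId 1 z hz
      rw [hA1, hB1, hB2, ttId_mul, Adj0.mul_zero, Adj0.add_zero]
    · show A.1 1 0 * B.1 0 0 + A.1 1 1 * B.1 1 0 = Adj0.zero
      rw [hA2, hB2, Adj0.zero_mul, Adj0.mul_zero, Adj0.add_zero]⟩⟩

noncomputable instance {z : ℝ} {hz : (0:ℝ) ≤ 1} : Mul (LowerS z hz) :=
  ⟨fun A B => ⟨A.1 * B.1, by
    obtain ⟨hA1, hA2⟩ := A.2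
    obtain ⟨hB1, hB2⟩ := B.2
    constructor
    · show A.1 0 0 * B.1 0 0 + A.1 0 1 * B.1 1 0 = ttId 1 z hz
      rw [hA1, hB1, hA2, ttId_mul, Adj0.zero_mul, Adj0.add_zero]
    · show A.1 0 0 * B.1 0 1 + A.1 0 1 * B.1 1 1 = Adj0.zero
      rw [hA1, hB2, hA2, ttId_mul, Adj0.zero_mul, Adj0.add_zero]⟩⟩



namespace SP

def Mb (k : ℕ) : ℤ := (k : ℤ) + 8
def af (k j : ℕ) : ℤ := (Mb k) ^ (j+1)
def Pf (k j : ℕ) : ℤ := ∑ l ∈ Finset.range j, (Mb k)^(l+1)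
def Qs (k : ℕ) : ℤ := Pf k k
def cf (k j : ℕ) : ℤ := Qs k + j - Pf k j
def Hf (k : ℕ) : ℤ := k * (Qs k + k) + 2
def Ef (k : ℕ) : ℤ := Hf k + Qs k + k

lemma Mb_ge (k : ℕ) : (8:ℤ) ≤ Mb k := by
  have : (0:ℤ) ≤ (k:ℤ) := Int.ofNat_nonneg k
  simp only [Mb]; omega

lemma af_pos (k j : ℕ) : 1 ≤ af k j := one_le_pow₀ (by linarith [Mb_ge k])

lemma Pf_succ (k j : ℕ) : Pf k (j+1) = Pf k j + af k j := by
  simp [Pf, af, Finset.sum_range_succ]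

lemma Pf_nonneg (k j : ℕ) : 0 ≤ Pf k j := by
  apply Finset.sum_nonneg; intro l _
  have := Mb_ge k; positivity

lemma Pf_mono (k : ℕ) {j j' : ℕ} (h : j ≤ j') : Pf k j ≤ Pf k j' := by
  induction j' with
  | zero => simp at h; simp [h]
  | succ m ih =>
    rcases Nat.eq_or_lt_of_le h with rfl | h'
    · exact le_refl _
    · have := ih (by omega)
      rw [Pf_succ]
      linarith [af_pos k m]

lemma af_mono (k : ℕ) {j j' : ℕ} (h : j ≤ j') : af k j ≤ af k j' :=
  pow_le_pow_right₀ (by linarith [Mb_ge k]) (by omega)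

lemma Pf_lt_af (k j : ℕ) : Pf k j < af k j := by
  induction j with
  | zero => simp [Pf]; exact lt_of_lt_of_le one_pos (af_pos k 0)
  | succ m ih =>
    rw [Pf_succ]
    have h2 : 2 * af k m ≤ af k (m+1) := by
      have : af k (m+1) = Mb k * af k m := by ring_nf; simp [af]; ring
      rw [this]
      have := af_pos k m
      nlinarith [Mb_ge k]
    linarith

lemma af_le_Qs (k j : ℕ) (h : j < k) : af k j ≤ Qs k := by
  have h1 : Pf k (j+1) ≤ Pf k k := Pf_mono k (by omega)
  rw [Pf_succ] at h1
  have := Pf_nonneg k j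
  simp only [Qs]; linarith

lemma Qs_nonneg (k : ℕ) : 0 ≤ Qs k := Pf_nonneg k k

lemma cf_ge_one (k j : ℕ) (h : j < k) : 1 ≤ cf k j := by
  have h1 : Pf k (j+1) ≤ Qs k := Pf_mono k (by omega)
  rw [Pf_succ] at h1
  have h2 := af_pos k j
  have : (0:ℤ) ≤ (j:ℤ) := Int.ofNat_nonneg j
  simp only [cf]; omega

lemma cf_le (k j : ℕ) (h : j < k) : cf k j ≤ Qs k + k := by
  have := Pf_nonneg k j
  have : (j:ℤ) ≤ (k:ℤ) := by exact_mod_cast Nat.le_of_lt h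
  simp only [cf]; omega

lemma Hf_nonneg (k : ℕ) : 0 ≤ Hf k := by
  have := Qs_nonneg k
  have : (0:ℤ) ≤ (k:ℤ) := Int.ofNat_nonneg k
  simp only [Hf]; positivity


lemma Hf_def (k : ℕ) : Hf k = k * (Qs k + k) + 2 := rfl
lemma Ef_def (k : ℕ) : Ef k = Hf k + Qs k + k := rfl

lemma af_ge_Mb (k j : ℕ) : Mb k ≤ af k j := by
  have h := af_mono k (Nat.zero_le j)
  have h0 : af k 0 = Mb k := by simp [af]
  omega

noncomputable def stepAV (k : ℕ) (p : ℤ × ℤ) (j : ℕ) : ℤ × ℤ :=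
  (p.1 + af k j, max (p.1 + cf k j) (p.2 + 1))

noncomputable def AL (k : ℕ) (L : List ℕ) : ℤ := (L.foldl (stepAV k) (0, -1)).1
noncomputable def VL (k : ℕ) (L : List ℕ) : ℤ := (L.foldl (stepAV k) (0, -1)).2

lemma AL_nil (k : ℕ) : AL k [] = 0 := rfl
lemma VL_nil (k : ℕ) : VL k [] = -1 := rfl

lemma foldl_stepAV_fst (k : ℕ) (L : List ℕ) (p : ℤ × ℤ) :
    (L.foldl (stepAV k) p).1 = p.1 + (L.map (af k)).sum := by
  induction L generalizing p with
  | nil => simp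
  | cons x l ih => simp [ih, stepAV]; ring

lemma AL_append (k : ℕ) (L : List ℕ) (j : ℕ) : AL k (L ++ [j]) = AL k L + af k j := by
  simp [AL, List.foldl_append, stepAV]

lemma VL_append (k : ℕ) (L : List ℕ) (j : ℕ) :
    VL k (L ++ [j]) = max (AL k L + cf k j) (VL k L + 1) := by
  simp [VL, AL, List.foldl_append, stepAV]

lemma VL_append_ge (k : ℕ) (L1 L2 : List ℕ) (j : ℕ) :
    AL k L1 + cf k j + L2.length ≤ VL k (L1 ++ j :: L2) := by
  induction L2 using List.reverseRecOn with
  | nil =>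
    rw [show L1 ++ [j] = L1 ++ [j] from rfl, VL_append]
    simp
  | append_singleton l x ih =>
    have : L1 ++ j :: (l ++ [x]) = (L1 ++ j :: l) ++ [x] := by simp
    rw [this, VL_append]
    simp only [List.length_append, List.length_cons, List.length_nil]
    push_cast
    have := le_max_right (AL k (L1 ++ j :: l) + cf k x) (VL k (L1 ++ j :: l) + 1)
    push_cast at ih ⊢
    omega

lemma AVL_bounds (k : ℕ) (L : List ℕ) (hL : ∀ j ∈ L, j < k) :
    0 ≤ AL k L ∧ AL k L ≤ L.length * Qs k ∧
    -1 ≤ VL k L ∧ VL k L ≤ L.length * (Qs k + k) := by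
  induction L using List.reverseRecOn with
  | nil => simp [AL, VL]
  | append_singleton l x ih =>
    have hx : x < k := hL x (by simp)
    obtain ⟨h1, h2, h3, h4⟩ := ih (fun j hj => hL j (by simp [hj]))
    have hQ := Qs_nonneg k
    have hkk : (0:ℤ) ≤ (k:ℤ) := Int.ofNat_nonneg k
    rw [AL_append, VL_append]
    have ha1 := af_pos k x
    have ha2 := af_le_Qs k x hx
    have hc1 := cf_ge_one k x hx
    have hc2 := cf_le k x hx
    simp only [List.length_append, List.length_cons, List.length_nil]
    push_cast
    constructor
    · omega
    constructor
    · nlinarith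
    constructor
    · omega
    · have e1 : AL k l + cf k x ≤ (l.length + 1) * (Qs k + k) := by nlinarith [Int.ofNat_nonneg l.length]
      have e2 : VL k l + 1 ≤ (l.length + 1) * (Qs k + k) := by nlinarith [Int.ofNat_nonneg l.length]
      omega

lemma VL_ge_len (k : ℕ) (L : List ℕ) : -1 + L.length ≤ VL k L := by
  induction L using List.reverseRecOn with
  | nil => simp [VL]
  | append_singleton l x ih =>
    rw [VL_append]
    simp only [List.length_append, List.length_cons, List.length_nil]
    have := le_max_right (AL k l + cf k x) (VL k l + 1)
    push_cast at ih ⊢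
    omega


noncomputable def Lof (u : ℕ → ℕ) (m : ℕ) : List ℕ := List.ofFn (fun i : Fin m => u i)

lemma Lof_succ (u : ℕ → ℕ) (m : ℕ) : Lof u (m+1) = Lof u m ++ [u m] := by
  rw [Lof, List.ofFn_succ', List.concat_eq_append]
  simp [Lof]

lemma Lof_cons (u : ℕ → ℕ) (m : ℕ) : Lof u (m+1) = u 0 :: Lof (fun i => u (i+1)) m := by
  rw [Lof, List.ofFn_succ]
  simp [Lof]

lemma Lof_length (u : ℕ → ℕ) (m : ℕ) : (Lof u m).length = m := by simp [Lof]

lemma Lof_add (u : ℕ → ℕ) (a b : ℕ) :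
    Lof u (a + b) = Lof u a ++ Lof (fun i => u (a + i)) b := by
  induction b with
  | zero => simp [Lof]
  | succ b ih =>
    have h1 : a + (b+1) = (a + b) + 1 := by omega
    rw [h1, Lof_succ, ih, Lof_succ, List.append_assoc]

lemma Lof_split (u : ℕ → ℕ) (m₁ m₂ : ℕ) (h : m₁ < m₂) :
    ∃ v : ℕ → ℕ, Lof u m₂ = Lof u m₁ ++ u m₁ :: Lof v (m₂ - m₁ - 1) := by
  have h1 : m₂ = m₁ + ((m₂ - m₁ - 1) + 1) := by omega
  refine ⟨fun i => u (m₁ + (i+1)), ?_⟩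
  rw [h1, Lof_add, Lof_cons]
  simp

lemma AL_Lof_succ (k : ℕ) (u : ℕ → ℕ) (m : ℕ) :
    AL k (Lof u (m+1)) = AL k (Lof u m) + af k (u m) := by
  rw [Lof_succ, AL_append]

lemma VL_Lof_succ (k : ℕ) (u : ℕ → ℕ) (m : ℕ) :
    VL k (Lof u (m+1)) = max (AL k (Lof u m) + cf k (u m)) (VL k (Lof u m) + 1) := by
  rw [Lof_succ, VL_append]

lemma AL_Lof_id (k m : ℕ) : AL k (Lof (fun t => t) m) = Pf k m := by
  induction m with
  | zero => simp [Lof, AL, Pf]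
  | succ m ih => rw [AL_Lof_succ, ih, Pf_succ]
lemma VL_Lof_id (k m : ℕ) (hm : 1 ≤ m) : VL k (Lof (fun t => t) m) = Qs k + m - 1 := by
  induction m with
  | zero => omega
  | succ m ih =>
    rcases Nat.eq_or_lt_of_le hm with h | h'
    · rw [VL_Lof_succ]
      have hm0 : m = 0 := by omega
      subst hm0
      have : VL k (Lof (fun t => t) 0) = -1 := by simp [Lof, VL]
      have hA : AL k (Lof (fun t => t) 0) = 0 := by simp [Lof, AL]
      rw [this, hA]
      have : cf k 0 = Qs k := by simp [cf, Pf]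
      rw [this]
      have := Qs_nonneg k
      push_cast
      omega
    · have ih' := ih (by omega)
      rw [VL_Lof_succ, ih', AL_Lof_id]
      simp only [cf]
      push_cast
      omega

lemma AL_Lof_mono (k : ℕ) (u : ℕ → ℕ) {m m' : ℕ} (h : m ≤ m') :
    AL k (Lof u m) ≤ AL k (Lof u m') := by
  induction m' with
  | zero => simp at h; simp [h]
  | succ mm ih =>
    rcases Nat.eq_or_lt_of_le h with rfl | h'
    · exact le_refl _
    · have := ih (by omega)
      rw [AL_Lof_succ]
      linarith [af_pos k (u mm)]



lemma VL_perm_gt (k : ℕ) (u : ℕ → ℕ) (t₀ t' : ℕ)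
    (h1 : ∀ r < t₀, u r = r) (h2 : t₀ < u t₀) (h3 : t₀ < t') (h4 : t' < k) (h5 : u t' = t₀) :
    Qs k + k - 1 < VL k (Lof u k) := by
  obtain ⟨v, hsp⟩ := Lof_split u t' k h4
  rw [hsp, h5]
  have hge := VL_append_ge k (Lof u t') (Lof v (k - t' - 1)) (u t')
  rw [Lof_length, h5] at hge
  have hA0 : ∀ m, m ≤ t₀ → AL k (Lof u m) = Pf k m := by
    intro m
    induction m with
    | zero => intro _; simp [Lof, AL, Pf]
    | succ m ih =>
      intro hm
      rw [AL_Lof_succ, ih (by omega), h1 m (by omega), Pf_succ]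
  have hA1 : AL k (Lof u (t₀+1)) = Pf k t₀ + af k (u t₀) := by
    rw [AL_Lof_succ, hA0 t₀ le_rfl]
  have hA2 : AL k (Lof u (t₀+1)) ≤ AL k (Lof u t') := AL_Lof_mono k u (by omega)
  have haf : (k:ℤ) + 8 ≤ af k (u t₀) := by
    have h := af_ge_Mb k (u t₀)
    have hm : Mb k = (k:ℤ) + 8 := rfl
    omega
  have hcf : cf k t₀ = Qs k + t₀ - Pf k t₀ := rfl
  have hcast : ((k - t' - 1 : ℕ) : ℤ) = (k:ℤ) - t' - 1 := by push_cast; omega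
  rw [hcast, hcf] at hge
  have ht' : (t₀:ℤ) < t' := by exact_mod_cast h3
  have ht'' : (t':ℤ) < k := by exact_mod_cast h4
  linarith



lemma foldl_optStep_some {T : Type*} (op : T → T → T) (l : List T) (a : T) :
    l.foldl (optStep op) (some a) = some (l.foldl op a) := by
  induction l generalizing a with
  | nil => rfl
  | cons x t ih => exact ih (op a x)

lemma finSum_eq {T : Type*} [Add T] {m : ℕ} (g : Fin (m+1) → T) :
    finSum g = some ((List.ofFn (fun i : Fin m => g i.succ)).foldl (· + ·) (g 0)) := by
  rw [finSum, List.ofFn_succ, List.foldl_cons]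
  exact foldl_optStep_some _ _ _

lemma finProd_eq {T : Type*} [Mul T] {m : ℕ} (g : Fin (m+1) → T) :
    finProd g = some ((List.ofFn (fun i : Fin m => g i.succ)).foldl (· * ·) (g 0)) := by
  rw [finProd, List.ofFn_succ, List.foldl_cons]
  exact foldl_optStep_some _ _ _

section Phi
variable {S : Type} [Add S] [Mul S] (φ : S → ℤ)
variable (hadd : ∀ a b : S, φ (a + b) = max (φ a) (φ b))
variable (hmul : ∀ a b : S, φ (a * b) = φ a + φ b)
include hadd

lemma phi_foldl_le {B : ℤ} : ∀ (l : List S) (a : S), φ a ≤ B → (∀ x ∈ l, φ x ≤ B) →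
    φ (l.foldl (· + ·) a) ≤ B := by
  intro l
  induction l with
  | nil => intro a ha _; exact ha
  | cons x t ih =>
    intro a ha hl
    apply ih
    · rw [hadd]
      exact max_le ha (hl x (by simp))
    · intro y hy; exact hl y (by simp [hy])

lemma le_phi_foldl : ∀ (l : List S) (a : S), φ a ≤ φ (l.foldl (· + ·) a) := by
  intro l
  induction l with
  | nil => intro a; exact le_refl _
  | cons x t ih =>
    intro a
    refine le_trans ?_ (ih (a + x))
    rw [hadd]; exact le_max_left _ _

lemma mem_le_phi_foldl : ∀ (l : List S) (a x : S), x ∈ l → φ x ≤ φ (l.foldl (· + ·) a) := by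
  intro l
  induction l with
  | nil => intro a x hx; simp at hx
  | cons y t ih =>
    intro a x hx
    rcases List.mem_cons.mp hx with rfl | hx'
    · refine le_trans ?_ (le_phi_foldl φ hadd t (a + x))
      rw [hadd]; exact le_max_right _ _
    · exact ih (a + y) x hx'

include hmul in
lemma phi_matMul_le {n : ℕ} (A B : MatSR S n) (i j : Fin n) {B0 : ℤ}
    (h : ∀ kk : Fin n, φ (A i kk) + φ (B kk j) ≤ B0) :
    φ (matMul A B i j) ≤ B0 := by
  cases n with
  | zero => exact i.elim0
  | succ m =>
    rw [matMul, finSum_eq, Option.getD_some]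
    apply phi_foldl_le φ hadd
    · rw [hmul]; exact h 0
    · intro x hx
      rw [List.mem_ofFn] at hx
      obtain ⟨kk, rfl⟩ := hx
      rw [hmul]; exact h _

include hmul in
lemma le_phi_matMul {n : ℕ} (A B : MatSR S n) (i j : Fin n) (kk : Fin n) :
    φ (A i kk) + φ (B kk j) ≤ φ (matMul A B i j) := by
  cases n with
  | zero => exact i.elim0
  | succ m =>
    rw [matMul, finSum_eq, Option.getD_some]
    induction kk using Fin.cases with
    | zero => rw [← hmul]; exact le_phi_foldl φ hadd _ _
    | succ kk' =>
      rw [← hmul]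
      apply mem_le_phi_foldl φ hadd
      rw [List.mem_ofFn]
      exact ⟨kk', rfl⟩

end Phi

section Gen
variable {S : Type} [Add S] [Mul S] (φ : S → ℤ) (ψ : ℤ → S) (Z : ℤ)
variable (hadd : ∀ a b : S, φ (a + b) = max (φ a) (φ b))
variable (hmul : ∀ a b : S, φ (a * b) = φ a + φ b)
variable (k : ℕ) (hk : 2 ≤ k)
variable (hψ : ∀ m : ℤ, 1 ≤ m → m ≤ Ef k → φ (ψ m) = m + Z)

noncomputable def Gm (n : ℕ) (j : ℕ) : MatSR S n := fun r c =>
  if r.val = 0 ∧ c.val = 0 then ψ (Hf k + af k j)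
  else if r.val = 0 ∧ c.val = 1 then ψ (Hf k + cf k j)
  else if r.val = 1 ∧ c.val = 1 then ψ (Hf k + 1)
  else ψ 1

omit [Add S] [Mul S] in
lemma Hf_big (hk : 2 ≤ k) : (k:ℤ) * (Qs k + k) + 2 ≤ Ef k ∧ (0:ℤ) ≤ (k:ℤ) * (Qs k + k) ∧ (1:ℤ) ≤ (k:ℤ) := by
  have h1 := Qs_nonneg k
  have h2 : (2:ℤ) ≤ (k:ℤ) := by exact_mod_cast hk
  have h3 : (0:ℤ) ≤ (k:ℤ) * (Qs k + k) := by positivity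
  refine ⟨?_, h3, by linarith⟩
  rw [Ef_def, Hf_def]
  linarith

include hψ hk

lemma Gm_phi00 {n : ℕ} (j : ℕ) (hj : j < k) (r c : Fin n) (hr : r.val = 0) (hc : c.val = 0) :
    φ (Gm ψ k n j r c) = Hf k + af k j + Z := by
  have hb := Hf_big k hk
  have h1 := af_pos k j
  have h2 := af_le_Qs k j hj
  have h3 := Qs_nonneg k
  have e1 : 1 ≤ Hf k + af k j := by rw [Hf_def]; linarith [hb.2.1]
  have e2 : Hf k + af k j ≤ Ef k := by rw [Ef_def, Hf_def]; linarith [hb.2.1]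
  simp only [Gm, hr, hc, and_self, if_pos]
  rw [hψ _ e1 e2]

lemma Gm_phi01 {n : ℕ} (j : ℕ) (hj : j < k) (r c : Fin n) (hr : r.val = 0) (hc : c.val = 1) :
    φ (Gm ψ k n j r c) = Hf k + cf k j + Z := by
  have hb := Hf_big k hk
  have h1 := cf_ge_one k j hj
  have h2 := cf_le k j hj
  have h3 := Qs_nonneg k
  have e1 : 1 ≤ Hf k + cf k j := by rw [Hf_def]; linarith [hb.2.1]
  have e2 : Hf k + cf k j ≤ Ef k := by rw [Ef_def, Hf_def]; linarith [hb.2.1, hb.2.2]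
  simp only [Gm, hr, hc]
  norm_num
  rw [hψ _ e1 e2]

lemma Gm_phi11 {n : ℕ} (j : ℕ) (r c : Fin n) (hr : r.val = 1) (hc : c.val = 1) :
    φ (Gm ψ k n j r c) = Hf k + 1 + Z := by
  have hb := Hf_big k hk
  have h3 := Qs_nonneg k
  have e1 : 1 ≤ Hf k + 1 := by rw [Hf_def]; linarith [hb.2.1]
  have e2 : Hf k + 1 ≤ Ef k := by rw [Ef_def]; linarith [hb.2.2]
  simp only [Gm, hr, hc]
  norm_num
  rw [hψ _ e1 e2]

lemma Gm_phiE {n : ℕ} (j : ℕ) (r c : Fin n)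
    (h : ¬(r.val = 0 ∧ c.val = 0) ∧ ¬(r.val = 0 ∧ c.val = 1) ∧ ¬(r.val = 1 ∧ c.val = 1)) :
    φ (Gm ψ k n j r c) = 1 + Z := by
  have hb := Hf_big k hk
  have h3 := Qs_nonneg k
  have e2 : (1:ℤ) ≤ Ef k := by rw [Ef_def, Hf_def]; linarith [hb.2.1, hb.2.2]
  simp only [Gm, if_neg h.1, if_neg h.2.1, if_neg h.2.2]
  rw [hψ _ le_rfl e2]

include hadd hmul in
lemma inv_full (n : ℕ) (hn : 2 ≤ n) (L : List ℕ) :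
    L ≠ [] → (∀ j ∈ L, j < k) → L.length ≤ k →
    ∃ Pm : MatSR S n, ((L.map (Gm ψ k n)).foldl (optStep (· * ·)) none = some Pm) ∧
      (∀ r c : Fin n, r.val = 0 → c.val = 0 →
        φ (Pm r c) = L.length * (Hf k + Z) + AL k L) ∧
      (∀ r c : Fin n, r.val = 0 → c.val = 1 →
        φ (Pm r c) = L.length * (Hf k + Z) + VL k L) ∧
      (∀ r c : Fin n, r.val = 0 → 2 ≤ c.val →
        φ (Pm r c) ≤ ((L.length : ℤ) - 1) * (Ef k + Z) + 1 + Z) := by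
  induction L using List.reverseRecOn with
  | nil => intro h; exact absurd rfl h
  | append_singleton l x ih =>
    intro _ hmem hlen
    have hx : x < k := hmem x (by simp)
    have hkz : (2:ℤ) ≤ (k:ℤ) := by exact_mod_cast hk
    have hQ := Qs_nonneg k
    have haf1 := af_pos k x
    have haf2 := af_le_Qs k x hx
    have hcf1 := cf_ge_one k x hx
    have hcf2 := cf_le k x hx
    have hH : Hf k = (k:ℤ)*(Qs k + k) + 2 := Hf_def k
    have hE : Ef k = Hf k + Qs k + k := Ef_def k
    have hH0 : 0 ≤ Hf k := by nlinarith
    by_cases hl : l = []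
    · subst hl
      refine ⟨Gm ψ k n x, rfl, ?_, ?_, ?_⟩
      · intro r c hr hc
        rw [Gm_phi00 φ ψ Z k hk hψ x hx r c hr hc]
        have hA : AL k ([] ++ [x]) = af k x := by
          rw [AL_append, AL_nil]; ring
        rw [hA]
        simp
        ring
      · intro r c hr hc
        rw [Gm_phi01 φ ψ Z k hk hψ x hx r c hr hc]
        have hV : VL k ([] ++ [x]) = cf k x := by
          rw [VL_append, VL_nil, AL_nil]
          simp
          omega
        rw [hV]
        simp
        ring
      · intro r c hr hc
        rw [Gm_phiE φ ψ Z k hk hψ x r c ⟨by omega, by omega, by omega⟩]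
        simp
    · obtain ⟨Pm, hfold, h00, h01, hstr⟩ := ih hl (fun j hj => hmem j (by simp [hj]))
        (by simp at hlen ⊢; omega)
      have hfold' : (((l ++ [x]).map (Gm ψ k n)).foldl (optStep (· * ·)) none)
          = some (matMul Pm (Gm ψ k n x)) := by
        rw [List.map_append, List.foldl_append, hfold]
        rfl
      have hm1 : 1 ≤ l.length := List.length_pos_iff.mpr hl
      have hmk : l.length + 1 ≤ k := by simp at hlen; omega
      obtain ⟨hAL0, hALm, hVLlb, hVLm⟩ := AVL_bounds k l (fun j hj => hmem j (by simp [hj]))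
      have hVL0 : 0 ≤ VL k l := by
        have h' := VL_ge_len k l
        have : (1:ℤ) ≤ (l.length : ℤ) := by exact_mod_cast hm1
        linarith
      have hmz : (1:ℤ) ≤ (l.length:ℤ) := by exact_mod_cast hm1
      have hmkz : (l.length:ℤ) + 1 ≤ (k:ℤ) := by exact_mod_cast hmk
      have hmul1 : (l.length:ℤ) * (Qs k + k) ≤ (k:ℤ)*(Qs k + k) := by
        apply mul_le_mul_of_nonneg_right (by linarith) (by linarith)
      have hmul2 : ((l.length:ℤ)-1) * (Qs k + k) ≤ (k:ℤ)*(Qs k + k) := by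
        apply mul_le_mul_of_nonneg_right (by linarith) (by linarith)
      have hmulexp : (l.length:ℤ)*(Qs k + k) = (l.length:ℤ)*Qs k + (l.length:ℤ)*k := by ring
      have hmulexp2 : ((l.length:ℤ)-1)*(Qs k + k) = ((l.length:ℤ)-1)*Qs k + ((l.length:ℤ)-1)*k := by
        ring
      have hmk0 : (0:ℤ) ≤ (l.length:ℤ)*(k:ℤ) := by positivity
      have hexpH : ((l.length:ℤ)+1)*(Hf k + Z) = (l.length:ℤ)*(Hf k + Z) + Hf k + Z := by ring
      have hexpE2 : ((l.length:ℤ))*(Ef k + Z)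
          = (l.length:ℤ)*(Hf k + Z) + (l.length:ℤ)*Qs k + (l.length:ℤ)*k := by rw [hE]; ring
      have hexpEH : ((l.length:ℤ)-1)*(Ef k + Z)
          = ((l.length:ℤ)-1)*(Hf k + Z) + ((l.length:ℤ)-1)*Qs k + ((l.length:ℤ)-1)*k := by
        rw [hE]; ring
      have hexpH2 : ((l.length:ℤ)-1)*(Hf k + Z) = (l.length:ℤ)*(Hf k + Z) - (Hf k + Z) := by ring
      refine ⟨matMul Pm (Gm ψ k n x), hfold', ?_, ?_, ?_⟩
      · intro r c hr hc
        rw [AL_append]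
        simp only [List.length_append, List.length_cons, List.length_nil]
        apply le_antisymm
        · apply phi_matMul_le φ hadd hmul
          intro kk
          by_cases e0 : kk.val = 0
          · rw [h00 r kk hr e0, Gm_phi00 φ ψ Z k hk hψ x hx kk c e0 hc]
            push_cast
            linarith
          · by_cases e1 : kk.val = 1
            · rw [h01 r kk hr e1, Gm_phiE φ ψ Z k hk hψ x kk c ⟨by omega, by omega, by omega⟩]
              push_cast
              linarith
            · rw [Gm_phiE φ ψ Z k hk hψ x kk c ⟨by omega, by omega, by omega⟩]
              have hb := hstr r kk hr (by omega)
              push_cast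
              linarith
        · have hlow := le_phi_matMul φ hadd hmul Pm (Gm ψ k n x) r c r
          rw [h00 r r hr hr, Gm_phi00 φ ψ Z k hk hψ x hx r c hr hc] at hlow
          push_cast
          linarith
      · intro r c hr hc
        rw [VL_append]
        simp only [List.length_append, List.length_cons, List.length_nil]
        have hmax1 : AL k l + cf k x ≤ max (AL k l + cf k x) (VL k l + 1) := le_max_left _ _
        have hmax2 : VL k l + 1 ≤ max (AL k l + cf k x) (VL k l + 1) := le_max_right _ _
        apply le_antisymm
        · apply phi_matMul_le φ hadd hmul
          intro kk
          by_cases e0 : kk.val = 0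
          · rw [h00 r kk hr e0, Gm_phi01 φ ψ Z k hk hψ x hx kk c e0 hc]
            push_cast
            linarith
          · by_cases e1 : kk.val = 1
            · rw [h01 r kk hr e1, Gm_phi11 φ ψ Z k hk hψ x kk c e1 hc]
              push_cast
              linarith
            · rw [Gm_phiE φ ψ Z k hk hψ x kk c ⟨by omega, by omega, by omega⟩]
              have hb := hstr r kk hr (by omega)
              push_cast
              linarith
        · rcases le_or_gt (VL k l + 1) (AL k l + cf k x) with hmx | hmx
          · rw [max_eq_left hmx]
            have hlow := le_phi_matMul φ hadd hmul Pm (Gm ψ k n x) r c r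
            rw [h00 r r hr hr, Gm_phi01 φ ψ Z k hk hψ x hx r c hr hc] at hlow
            push_cast
            linarith
          · rw [max_eq_right (le_of_lt hmx)]
            have hi1 : (⟨1, by omega⟩ : Fin n).val = 1 := rfl
            have hlow := le_phi_matMul φ hadd hmul Pm (Gm ψ k n x) r c ⟨1, by omega⟩
            rw [h01 r ⟨1, by omega⟩ hr hi1,
              Gm_phi11 φ ψ Z k hk hψ x ⟨1, by omega⟩ c hi1 hc] at hlow
            push_cast
            linarith
      · intro r c hr hc
        simp only [List.length_append, List.length_cons, List.length_nil]
        apply phi_matMul_le φ hadd hmul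
        intro kk
        rw [Gm_phiE φ ψ Z k hk hψ x kk c ⟨by omega, by omega, by omega⟩]
        by_cases e0 : kk.val = 0
        · rw [h00 r kk hr e0]
          push_cast
          linarith
        · by_cases e1 : kk.val = 1
          · rw [h01 r kk hr e1]
            push_cast
            linarith
          · have hb := hstr r kk hr (by omega)
            push_cast
            linarith

end Gen

lemma foldl_add_zeros {S : Type u} [Add S] (l : List (Adj0 S)) (a : Adj0 S)
    (h : ∀ z ∈ l, z = Adj0.zero) : l.foldl (· + ·) a = a := by
  induction l generalizing a with
  | nil => rfl
  | cons x t ih =>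
    rw [List.foldl_cons, h x (by simp), Adj0.add_zero]
    exact ih a (fun z hz => h z (by simp [hz]))

lemma finSum_adj0_one {S : Type u} [Add S] {n : ℕ} (hn : 1 ≤ n) (f : Fin n → Adj0 S) (x : S)
    (d : Adj0 S) (h0 : ∀ kk : Fin n, kk.val = 0 → f kk = Adj0.elem x)
    (h1 : ∀ kk : Fin n, 1 ≤ kk.val → f kk = Adj0.zero) :
    (finSum f).getD d = Adj0.elem x := by
  cases n with
  | zero => omega
  | succ m =>
    rw [finSum_eq, Option.getD_some, h0 0 rfl]
    apply foldl_add_zeros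
    intro z hz
    rw [List.mem_ofFn] at hz
    obtain ⟨kk, rfl⟩ := hz
    exact h1 _ (by simp)

lemma finSum_adj0_two {S : Type u} [Add S] {n : ℕ} (hn : 2 ≤ n) (f : Fin n → Adj0 S) (x y : S)
    (d : Adj0 S) (h0 : ∀ kk : Fin n, kk.val = 0 → f kk = Adj0.elem x)
    (h1 : ∀ kk : Fin n, kk.val = 1 → f kk = Adj0.elem y)
    (h2 : ∀ kk : Fin n, 2 ≤ kk.val → f kk = Adj0.zero) :
    (finSum f).getD d = Adj0.elem (x + y) := by
  cases n with
  | zero => omega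
  | succ m =>
    cases m with
    | zero => omega
    | succ m' =>
      rw [finSum_eq, Option.getD_some, h0 0 rfl, List.ofFn_succ, List.foldl_cons]
      have h1' : f (Fin.succ 0) = Adj0.elem y := h1 _ rfl
      rw [h1', Adj0.elem_add_elem]
      apply foldl_add_zeros
      intro z hz
      rw [List.mem_ofFn] at hz
      obtain ⟨kk, rfl⟩ := hz
      exact h2 _ (by simp)


section GenU
variable {S : Type} [Add S] [Mul S] (φ : S → ℤ) (ψ : ℤ → S) (Z : ℤ)
variable (hadd : ∀ a b : S, φ (a + b) = max (φ a) (φ b))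
variable (hmul : ∀ a b : S, φ (a * b) = φ a + φ b)
variable (k : ℕ) (hk : 2 ≤ k)
variable (hψ : ∀ m : ℤ, 1 ≤ m → m ≤ Ef k → φ (ψ m) = m + Z)

noncomputable def GmU (n : ℕ) (j : ℕ) : MatSR (Adj0 S) n := fun r c =>
  if c.val < r.val then Adj0.zero
  else if r.val = 0 ∧ c.val = 0 then Adj0.elem (ψ (Hf k + af k j))
  else if r.val = 0 ∧ c.val = 1 then Adj0.elem (ψ (Hf k + cf k j))
  else if r.val = 1 ∧ c.val = 1 then Adj0.elem (ψ (Hf k + 1))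
  else Adj0.elem (ψ 1)

omit [Add S] [Mul S] in
lemma GmU_isUT (n j : ℕ) : IsUT (GmU ψ k n j) := by
  constructor
  · intro i j' h
    simp only [GmU, if_pos h]
  · intro i j' h
    rw [GmU]
    rw [if_neg (not_lt.2 h)]
    split_ifs <;> exact ⟨_, rfl⟩

noncomputable def GU (n : ℕ) (j : ℕ) : UTMat S n := ⟨GmU ψ k n j, GmU_isUT ψ k n j⟩

omit [Add S] [Mul S] in
lemma GmU00 {n : ℕ} (j : ℕ) {r c : Fin n} (hr : r.val = 0) (hc : c.val = 0) :
    GmU ψ k n j r c = Adj0.elem (ψ (Hf k + af k j)) := by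
  simp [GmU, hr, hc]

omit [Add S] [Mul S] in
lemma GmU01 {n : ℕ} (j : ℕ) {r c : Fin n} (hr : r.val = 0) (hc : c.val = 1) :
    GmU ψ k n j r c = Adj0.elem (ψ (Hf k + cf k j)) := by
  simp [GmU, hr, hc]

omit [Add S] [Mul S] in
lemma GmU11 {n : ℕ} (j : ℕ) {r c : Fin n} (hr : r.val = 1) (hc : c.val = 1) :
    GmU ψ k n j r c = Adj0.elem (ψ (Hf k + 1)) := by
  simp [GmU, hr, hc]

omit [Add S] [Mul S] in
lemma GmU_zero {n : ℕ} (j : ℕ) {r c : Fin n} (h : c.val < r.val) :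
    GmU ψ k n j r c = Adj0.zero := by
  simp [GmU, h]

include hadd hmul hψ hk in
lemma inv_UT (n : ℕ) (hn : 2 ≤ n) (L : List ℕ) :
    L ≠ [] → (∀ j ∈ L, j < k) →
    ∃ Pm : UTMat S n, ((L.map (GU ψ k n)).foldl (optStep (· * ·)) none = some Pm) ∧
      (∀ r c : Fin n, r.val = 0 → c.val = 0 → ∃ a : S,
        Pm.1 r c = Adj0.elem a ∧ φ a = L.length * (Hf k + Z) + AL k L) ∧
      (∀ r c : Fin n, r.val = 0 → c.val = 1 → ∃ a : S,
        Pm.1 r c = Adj0.elem a ∧ φ a = L.length * (Hf k + Z) + VL k L) := by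
  have hkz : (2:ℤ) ≤ (k:ℤ) := by exact_mod_cast hk
  have hQ := Qs_nonneg k
  have hH : Hf k = (k:ℤ)*(Qs k + k) + 2 := Hf_def k
  have hE : Ef k = Hf k + Qs k + k := Ef_def k
  have hH0 : (0:ℤ) ≤ Hf k := by nlinarith
  have hval : ∀ j, j < k → (φ (ψ (Hf k + af k j)) = Hf k + af k j + Z ∧
      φ (ψ (Hf k + cf k j)) = Hf k + cf k j + Z ∧ φ (ψ (Hf k + 1)) = Hf k + 1 + Z) := by
    intro j hj
    have h1 := af_pos k j
    have h2 := af_le_Qs k j hj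
    have h3 := cf_ge_one k j hj
    have h4 := cf_le k j hj
    exact ⟨hψ _ (by linarith) (by rw [hE]; linarith),
      hψ _ (by linarith) (by rw [hE]; linarith),
      hψ _ (by linarith) (by rw [hE]; linarith)⟩
  induction L using List.reverseRecOn with
  | nil => intro h; exact absurd rfl h
  | append_singleton l x ih =>
    intro _ hmem
    have hx : x < k := hmem x (by simp)
    obtain ⟨hv1, hv2, hv3⟩ := hval x hx
    by_cases hl : l = []
    · subst hl
      refine ⟨GU ψ k n x, rfl, ?_, ?_⟩
      · intro r c hr hc
        refine ⟨ψ (Hf k + af k x), GmU00 ψ k x hr hc, ?_⟩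
        rw [hv1]
        have hA : AL k ([] ++ [x]) = af k x := by rw [AL_append, AL_nil]; ring
        rw [hA]
        simp
        ring
      · intro r c hr hc
        refine ⟨ψ (Hf k + cf k x), GmU01 ψ k x hr hc, ?_⟩
        rw [hv2]
        have hV : VL k ([] ++ [x]) = cf k x := by
          rw [VL_append, VL_nil, AL_nil]
          have := cf_ge_one k x hx
          simp
          omega
        rw [hV]
        simp
        ring
    · obtain ⟨Pm, hfold, h00, h01⟩ := ih hl (fun j hj => hmem j (by simp [hj]))
      have hfold' : (((l ++ [x]).map (GU ψ k n)).foldl (optStep (· * ·)) none)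
          = some (Pm * GU ψ k n x) := by
        rw [List.map_append, List.foldl_append, hfold]
        rfl
      obtain ⟨a, ha, hφa⟩ := h00 ⟨0, by omega⟩ ⟨0, by omega⟩ rfl rfl
      obtain ⟨b, hb, hφb⟩ := h01 ⟨0, by omega⟩ ⟨1, by omega⟩ rfl rfl
      refine ⟨Pm * GU ψ k n x, hfold', ?_, ?_⟩
      · intro r c hr hc
        have hrr : r = (⟨0, by omega⟩ : Fin n) := Fin.ext (by simp [hr])
        refine ⟨a * ψ (Hf k + af k x), ?_, ?_⟩
        · show matMul Pm.1 (GmU ψ k n x) r c = _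
          rw [matMul]
          apply finSum_adj0_one (by omega)
          · intro kk hkk
            have hkk' : kk = (⟨0, by omega⟩ : Fin n) := Fin.ext (by simp [hkk])
            rw [GmU00 ψ k x hkk hc, hrr, hkk', ha, Adj0.elem_mul_elem]
          · intro kk hkk
            rw [GmU_zero ψ k x (by omega), Adj0.mul_zero]
        · rw [hmul, hφa, hv1, AL_append]
          simp only [List.length_append, List.length_cons, List.length_nil]
          push_cast
          ring
      · intro r c hr hc
        have hrr : r = (⟨0, by omega⟩ : Fin n) := Fin.ext (by simp [hr])
        refine ⟨a * ψ (Hf k + cf k x) + b * ψ (Hf k + 1), ?_, ?_⟩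
        · show matMul Pm.1 (GmU ψ k n x) r c = _
          rw [matMul]
          apply finSum_adj0_two hn
          · intro kk hkk
            have hkk' : kk = (⟨0, by omega⟩ : Fin n) := Fin.ext (by simp [hkk])
            rw [GmU01 ψ k x hkk hc, hrr, hkk', ha, Adj0.elem_mul_elem]
          · intro kk hkk
            have hkk' : kk = (⟨1, by omega⟩ : Fin n) := Fin.ext (by simp [hkk])
            rw [GmU11 ψ k x hkk hc, hrr, hkk', hb, Adj0.elem_mul_elem]
          · intro kk hkk
            rw [GmU_zero ψ k x (by omega), Adj0.mul_zero]
        · rw [hadd, hmul, hmul, hφa, hφb, hv2, hv3, VL_append]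
          simp only [List.length_append, List.length_cons, List.length_nil]
          push_cast
          have e1 : (l.length:ℤ) * (Hf k + Z) + AL k l + (Hf k + cf k x + Z)
              = ((l.length:ℤ) + 1) * (Hf k + Z) + (AL k l + cf k x) := by ring
          have e2 : (l.length:ℤ) * (Hf k + Z) + VL k l + (Hf k + 1 + Z)
              = ((l.length:ℤ) + 1) * (Hf k + Z) + (VL k l + 1) := by ring
          rw [e1, e2, max_add_add_left]

end GenU

theorem notSP_mat {S : Type} [Add S] [Mul S] (φ : S → ℤ)
    (hinj : Function.Injective φ)
    (hadd : ∀ a b : S, φ (a + b) = max (φ a) (φ b))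
    (hmul : ∀ a b : S, φ (a * b) = φ a + φ b)
    (hψk : ∀ k : ℕ, 2 ≤ k → ∃ (ψ : ℤ → S) (Z : ℤ),
      ∀ m : ℤ, 1 ≤ m → m ≤ Ef k → φ (ψ m) = m + Z)
    (n : ℕ) (hn : 2 ≤ n) : ¬ StronglyPermutable (MatSR S n) := by
  rintro ⟨k, hk, hperm⟩
  obtain ⟨ψ, Z, hψ⟩ := hψk k hk
  obtain ⟨σ, hσne, heq⟩ := hperm (fun i => Gm ψ k n i.val)
  have hex : ∃ i, σ i ≠ i := by
    by_contra h
    push_neg at h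
    exact hσne (Equiv.ext h)
  obtain ⟨iw, hiw⟩ := hex
  have hSne : (Finset.univ.filter (fun i => σ i ≠ i)).Nonempty :=
    ⟨iw, Finset.mem_filter.mpr ⟨Finset.mem_univ _, hiw⟩⟩
  set t₀ := (Finset.univ.filter (fun i => σ i ≠ i)).min' hSne with ht₀
  have ht₀mem : σ t₀ ≠ t₀ := (Finset.mem_filter.mp (Finset.min'_mem _ hSne)).2
  have hfix : ∀ i : Fin k, i < t₀ → σ i = i := by
    intro i hi
    by_contra hne
    exact absurd (Finset.min'_le _ i (Finset.mem_filter.mpr ⟨Finset.mem_univ _, hne⟩))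
      (not_le.mpr hi)
  have hgt : t₀ < σ t₀ := by
    rcases lt_trichotomy (σ t₀) t₀ with h | h | h
    · exact absurd (σ.injective (hfix (σ t₀) h)) ht₀mem
    · exact absurd h ht₀mem
    · exact h
  set t' := σ.symm t₀ with ht'def
  have ht'app : σ t' = t₀ := σ.apply_symm_apply t₀
  have ht'gt : t₀ < t' := by
    rcases lt_trichotomy t' t₀ with h | h | h
    · have h2 := hfix t' h
      rw [ht'app] at h2
      exact absurd h2.symm (ne_of_lt h)
    · rw [← h] at ht₀mem
      exact absurd (h ▸ ht'app) ht₀mem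
    · exact h
  set u : ℕ → ℕ := fun t => if h : t < k then (σ ⟨t, h⟩ : Fin k).val else 0 with hu
  have hulid : List.ofFn (fun i : Fin k => Gm ψ k n i.val)
      = (Lof (fun t => t) k).map (Gm ψ k n) := by
    rw [Lof, List.map_ofFn]
    rfl
  have hulσ : List.ofFn (fun i : Fin k => Gm ψ k n (σ i).val)
      = (Lof u k).map (Gm ψ k n) := by
    rw [Lof, List.map_ofFn]
    congr 1
    funext i
    simp only [Function.comp_apply, hu, i.isLt, dif_pos, Fin.eta]
  have hlenid : (Lof (fun t => t) k).length = k := Lof_length _ _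
  have hlenσ : (Lof u k).length = k := Lof_length _ _
  have hmemid : ∀ j ∈ Lof (fun t => t) k, j < k := by
    intro j hj
    rw [Lof, List.mem_ofFn] at hj
    obtain ⟨i, rfl⟩ := hj
    exact i.isLt
  have hmemσ : ∀ j ∈ Lof u k, j < k := by
    intro j hj
    rw [Lof, List.mem_ofFn] at hj
    obtain ⟨i, rfl⟩ := hj
    simp only [hu, i.isLt, dif_pos]
    exact (σ ⟨i.val, i.isLt⟩).isLt
  have hneid : Lof (fun t => t) k ≠ [] :=
    List.ne_nil_of_length_pos (by rw [hlenid]; omega)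
  have hneσ : Lof u k ≠ [] :=
    List.ne_nil_of_length_pos (by rw [hlenσ]; omega)
  obtain ⟨Pid, hfid, _, hid01, _⟩ := inv_full φ ψ Z hadd hmul k hk hψ n hn
    (Lof (fun t => t) k) hneid hmemid (le_of_eq hlenid)
  obtain ⟨Pσ, hfσ, _, hσ01, _⟩ := inv_full φ ψ Z hadd hmul k hk hψ n hn
    (Lof u k) hneσ hmemσ (le_of_eq hlenσ)
  have e1 : finProd (fun i : Fin k => Gm ψ k n i.val) = some Pid := by
    rw [finProd, hulid]
    exact hfid
  have e2 : finProd (fun i : Fin k => Gm ψ k n (σ i).val) = some Pσ := by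
    rw [finProd, hulσ]
    exact hfσ
  have hPP : Pσ = Pid := by
    have h : some Pσ = some Pid :=
      calc some Pσ = finProd (fun i : Fin k => Gm ψ k n (σ i).val) := e2.symm
        _ = finProd (fun i : Fin k => Gm ψ k n i.val) := heq
        _ = some Pid := e1
    exact Option.some.inj h
  have hv1 := hid01 ⟨0, by omega⟩ ⟨1, by omega⟩ rfl rfl
  have hv2 := hσ01 ⟨0, by omega⟩ ⟨1, by omega⟩ rfl rfl
  rw [hPP] at hv2
  rw [hlenid] at hv1
  rw [hlenσ] at hv2
  have hVeq : VL k (Lof u k) = VL k (Lof (fun t => t) k) := by linarith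
  have hVid := VL_Lof_id k k (by omega)
  have h1 : ∀ r < t₀.val, u r = r := by
    intro r hr
    have hrk : r < k := lt_trans hr t₀.isLt
    simp only [hu, dif_pos hrk]
    have hlt : (⟨r, hrk⟩ : Fin k) < t₀ := by
      rw [Fin.lt_def]
      exact hr
    rw [hfix _ hlt]
  have h2 : t₀.val < u t₀.val := by
    simp only [hu, dif_pos t₀.isLt, Fin.eta]
    exact hgt
  have h3 : t₀.val < t'.val := ht'gt
  have h5 : u t'.val = t₀.val := by
    simp only [hu, dif_pos t'.isLt, Fin.eta, ht'app]
  have hVgt := VL_perm_gt k u t₀.val t'.val h1 h2 h3 t'.isLt h5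
  rw [hVeq, hVid] at hVgt
  exact lt_irrefl _ hVgt

theorem notSP_UT {S : Type} [Add S] [Mul S] (φ : S → ℤ)
    (hinj : Function.Injective φ)
    (hadd : ∀ a b : S, φ (a + b) = max (φ a) (φ b))
    (hmul : ∀ a b : S, φ (a * b) = φ a + φ b)
    (hψk : ∀ k : ℕ, 2 ≤ k → ∃ (ψ : ℤ → S) (Z : ℤ),
      ∀ m : ℤ, 1 ≤ m → m ≤ Ef k → φ (ψ m) = m + Z)
    (n : ℕ) (hn : 2 ≤ n) : ¬ StronglyPermutable (UTMat S n) := by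
  rintro ⟨k, hk, hperm⟩
  obtain ⟨ψ, Z, hψ⟩ := hψk k hk
  obtain ⟨σ, hσne, heq⟩ := hperm (fun i => GU ψ k n i.val)
  have hex : ∃ i, σ i ≠ i := by
    by_contra h
    push_neg at h
    exact hσne (Equiv.ext h)
  obtain ⟨iw, hiw⟩ := hex
  have hSne : (Finset.univ.filter (fun i => σ i ≠ i)).Nonempty :=
    ⟨iw, Finset.mem_filter.mpr ⟨Finset.mem_univ _, hiw⟩⟩
  set t₀ := (Finset.univ.filter (fun i => σ i ≠ i)).min' hSne with ht₀
  have ht₀mem : σ t₀ ≠ t₀ := (Finset.mem_filter.mp (Finset.min'_mem _ hSne)).2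
  have hfix : ∀ i : Fin k, i < t₀ → σ i = i := by
    intro i hi
    by_contra hne
    exact absurd (Finset.min'_le _ i (Finset.mem_filter.mpr ⟨Finset.mem_univ _, hne⟩))
      (not_le.mpr hi)
  have hgt : t₀ < σ t₀ := by
    rcases lt_trichotomy (σ t₀) t₀ with h | h | h
    · exact absurd (σ.injective (hfix (σ t₀) h)) ht₀mem
    · exact absurd h ht₀mem
    · exact h
  set t' := σ.symm t₀ with ht'def
  have ht'app : σ t' = t₀ := σ.apply_symm_apply t₀
  have ht'gt : t₀ < t' := by
    rcases lt_trichotomy t' t₀ with h | h | h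
    · have h2 := hfix t' h
      rw [ht'app] at h2
      exact absurd h2.symm (ne_of_lt h)
    · rw [← h] at ht₀mem
      exact absurd (h ▸ ht'app) ht₀mem
    · exact h
  set u : ℕ → ℕ := fun t => if h : t < k then (σ ⟨t, h⟩ : Fin k).val else 0 with hu
  have hulid : List.ofFn (fun i : Fin k => GU ψ k n i.val)
      = (Lof (fun t => t) k).map (GU ψ k n) := by
    rw [Lof, List.map_ofFn]
    rfl
  have hulσ : List.ofFn (fun i : Fin k => GU ψ k n (σ i).val)
      = (Lof u k).map (GU ψ k n) := by
    rw [Lof, List.map_ofFn]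
    congr 1
    funext i
    simp only [Function.comp_apply, hu, i.isLt, dif_pos, Fin.eta]
  have hlenid : (Lof (fun t => t) k).length = k := Lof_length _ _
  have hlenσ : (Lof u k).length = k := Lof_length _ _
  have hmemid : ∀ j ∈ Lof (fun t => t) k, j < k := by
    intro j hj
    rw [Lof, List.mem_ofFn] at hj
    obtain ⟨i, rfl⟩ := hj
    exact i.isLt
  have hmemσ : ∀ j ∈ Lof u k, j < k := by
    intro j hj
    rw [Lof, List.mem_ofFn] at hj
    obtain ⟨i, rfl⟩ := hj
    simp only [hu, i.isLt, dif_pos]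
    exact (σ ⟨i.val, i.isLt⟩).isLt
  have hneid : Lof (fun t => t) k ≠ [] :=
    List.ne_nil_of_length_pos (by rw [hlenid]; omega)
  have hneσ : Lof u k ≠ [] :=
    List.ne_nil_of_length_pos (by rw [hlenσ]; omega)
  obtain ⟨Pid, hfid, _, hid01⟩ := inv_UT φ ψ Z hadd hmul k hk hψ n hn
    (Lof (fun t => t) k) hneid hmemid
  obtain ⟨Pσ, hfσ, _, hσ01⟩ := inv_UT φ ψ Z hadd hmul k hk hψ n hn
    (Lof u k) hneσ hmemσ
  have e1 : finProd (fun i : Fin k => GU ψ k n i.val) = some Pid := by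
    rw [finProd, hulid]
    exact hfid
  have e2 : finProd (fun i : Fin k => GU ψ k n (σ i).val) = some Pσ := by
    rw [finProd, hulσ]
    exact hfσ
  have hPP : Pσ = Pid := by
    have h : some Pσ = some Pid :=
      calc some Pσ = finProd (fun i : Fin k => GU ψ k n (σ i).val) := e2.symm
        _ = finProd (fun i : Fin k => GU ψ k n i.val) := heq
        _ = some Pid := e1
    exact Option.some.inj h
  obtain ⟨aid, haid, hφid⟩ := hid01 ⟨0, by omega⟩ ⟨1, by omega⟩ rfl rfl
  obtain ⟨aσ, haσ, hφσ⟩ := hσ01 ⟨0, by omega⟩ ⟨1, by omega⟩ rfl rfl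
  rw [hPP] at haσ
  rw [haid] at haσ
  have haa : aσ = aid := by
    have := haσ.symm
    simpa using this
  rw [haa, hφid, hlenσ] at hφσ
  rw [hlenid] at hφσ
  have hVeq : VL k (Lof u k) = VL k (Lof (fun t => t) k) := by linarith
  have hVid := VL_Lof_id k k (by omega)
  have h1 : ∀ r < t₀.val, u r = r := by
    intro r hr
    have hrk : r < k := lt_trans hr t₀.isLt
    simp only [hu, dif_pos hrk]
    have hlt : (⟨r, hrk⟩ : Fin k) < t₀ := by
      rw [Fin.lt_def]
      exact hr
    rw [hfix _ hlt]
  have h2 : t₀.val < u t₀.val := by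
    simp only [hu, dif_pos t₀.isLt, Fin.eta]
    exact hgt
  have h3 : t₀.val < t'.val := ht'gt
  have h5 : u t'.val = t₀.val := by
    simp only [hu, dif_pos t'.isLt, Fin.eta, ht'app]
  have hVgt := VL_perm_gt k u t₀.val t'.val h1 h2 h3 t'.isLt h5
  rw [hVeq, hVid] at hVgt
  exact lt_irrefl _ hVgt

end SP


/-- for `n ≥ 2`, none of `M_n(ℕ_max)`, `M_n((-ℕ)_max)`, `UT_n(ℕ_max)`
and `UT_n((-ℕ)_max)` is strongly permutable. -/
theorem stmt_5 (n : ℕ) (hn : 2 ≤ n) :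
    ¬ StronglyPermutable (MatSR NMax n) ∧ ¬ StronglyPermutable (MatSR NegNMax n) ∧
    ¬ StronglyPermutable (UTMat NMax n) ∧ ¬ StronglyPermutable (UTMat NegNMax n) := by
  have hNinj : Function.Injective (fun x : NMax => (x.1 : ℤ)) := by
    intro a b h
    apply Subtype.ext
    simp only at h
    exact_mod_cast h
  have hNadd : ∀ a b : NMax, ((a + b).1 : ℤ) = max (a.1 : ℤ) (b.1 : ℤ) := by
    intro a b
    show ((max a.1 b.1 : ℕ) : ℤ) = _
    push_cast
    rfl
  have hNmul : ∀ a b : NMax, ((a * b).1 : ℤ) = (a.1 : ℤ) + (b.1 : ℤ) := by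
    intro a b
    show ((a.1 + b.1 : ℕ) : ℤ) = _
    push_cast
    rfl
  have hNψ : ∀ k : ℕ, 2 ≤ k → ∃ (ψ : ℤ → NMax) (Z : ℤ),
      ∀ m : ℤ, 1 ≤ m → m ≤ SP.Ef k → ((ψ m).1 : ℤ) = m + Z := by
    intro k _
    refine ⟨fun m => ⟨m.toNat + 1, Nat.succ_pos _⟩, 1, ?_⟩
    intro m h1 _
    show ((m.toNat + 1 : ℕ) : ℤ) = m + 1
    push_cast
    omega
  have hZinj : Function.Injective (fun x : NegNMax => x.1) := by
    intro a b h
    exact Subtype.ext h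
  have hZadd : ∀ a b : NegNMax, (a + b).1 = max a.1 b.1 := fun a b => rfl
  have hZmul : ∀ a b : NegNMax, (a * b).1 = a.1 + b.1 := fun a b => rfl
  have hZψ : ∀ k : ℕ, 2 ≤ k → ∃ (ψ : ℤ → NegNMax) (Z : ℤ),
      ∀ m : ℤ, 1 ≤ m → m ≤ SP.Ef k → (ψ m).1 = m + Z := by
    intro k _
    refine ⟨fun m => ⟨min (m - (SP.Ef k + 1)) (-1), by omega⟩, -(SP.Ef k + 1), ?_⟩
    intro m h1 h2
    show min (m - (SP.Ef k + 1)) (-1) = m + -(SP.Ef k + 1)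
    omega
  exact ⟨SP.notSP_mat (fun x : NMax => (x.1 : ℤ)) hNinj hNadd hNmul hNψ n hn,
    SP.notSP_mat (fun x : NegNMax => x.1) hZinj hZadd hZmul hZψ n hn,
    SP.notSP_UT (fun x : NMax => (x.1 : ℤ)) hNinj hNadd hNmul hNψ n hn,
    SP.notSP_UT (fun x : NegNMax => x.1) hZinj hZadd hZmul hZψ n hn⟩
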